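/- Let q be a prime power and n > 0, and let α ∈ F_q^{n+1} with rank H_{n₁,n₂}(α) = r and ρ(α) = ρ₁. Set c₁ = r, c₂ = n+2-r. Then there exist coprime polynomials A₁, A₂ ∈ F_q[T] with deg A₁ = ρ₁ and deg A₂ ≤ c₂ such that for every l, m with l+m-2 = n: ker H_{l,m}(α) = {0} if m ≤ c₁; ker H_{l,m}(α) = {B₁A₁ : deg B₁ ≤ m - c₁ - 1} if c₁+1 ≤ m ≤ c₂; and ker H_{l,m}(α) = {B₁A₁ + B₂A₂ : deg B₁ ≤ m - c₁ - 1, deg B₂ ≤ m - c₂ - 1} if c₂+1 ≤ m ≤ n+1, where polynomials of degree < m are identified with vectors in F_q^m. Moreover, if ρ₁ ≠ r then deg A₂ = c₂. -/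

import Mathlib

open Matrix Polynomial

/-- The `l × m` Hankel matrix whose `(i,j)` entry (zero-indexed) is `α (i + j)`. -/
def hankel (F : Type) [Field F] (l m : ℕ) (α : ℕ → F) : Matrix (Fin l) (Fin m) F :=
  Matrix.of fun i j => α (i.1 + j.1)

/-- `ρ(α)`: the largest `l ≤ n₁ = (n+2)/2` such that the top-left `l × l` Hankel matrix
of `α` is invertible (`0` if none exists). -/
noncomputable def rhoC (F : Type) [Field F] (n : ℕ) (α : ℕ → F) : ℕ :=
  sSup {l | l ≤ (n + 2) / 2 ∧ (hankel F l l α).det ≠ 0}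

/-- `π(α) = rank H_{n₁,n₂}(α) - ρ(α)`. -/
noncomputable def piC (F : Type) [Field F] (n : ℕ) (α : ℕ → F) : ℕ :=
  (hankel F ((n + 2) / 2) ((n + 3) / 2) α).rank - rhoC F n α

/-- `deg B ≤ k` for an integer bound `k` (so `k < 0` forces `B = 0`). -/
def degLE (F : Type) [Field F] (B : Polynomial F) (k : ℤ) : Prop :=
  ∀ i : ℕ, k < (i : ℤ) → B.coeff i = 0

/-- `A₁, A₂` are characteristic polynomials for the sequence `α` (of length `n+1`) with
first characteristic degree `c₁ = r` and second characteristic degree `c₂ = n+2-r`: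
the kernels of all the Hankel matrices `H_{l,m}(α)`, `l+m-2 = n`, consist exactly of the
(coefficient vectors of) polynomials `B₁A₁ + B₂A₂` with `deg B₁ ≤ m - c₁ - 1` and
`deg B₂ ≤ m - c₂ - 1`. -/
def IsCharSeq (F : Type) [Field F] (n r : ℕ) (A₁ A₂ : Polynomial F) (α : ℕ → F) : Prop :=
  ∀ l m : ℕ, 1 ≤ l → 1 ≤ m → l + m = n + 2 →
    {v : Fin m → F | (hankel F l m α).mulVec v = 0} =
    {v : Fin m → F | ∃ B₁ B₂ : Polynomial F,
      degLE F B₁ ((m : ℤ) - r - 1) ∧ degLE F B₂ ((m : ℤ) - ((n : ℤ) + 2 - r) - 1) ∧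
      v = fun i : Fin m => (B₁ * A₁ + B₂ * A₂).coeff (i : ℕ)}

/-- A sequence `α ∈ F^{n+1}` viewed as a function `ℕ → F` (zero beyond index `n`). -/
def extSeq (F : Type) [Field F] (n : ℕ) (α : Fin (n + 1) → F) : ℕ → F :=
  fun i => if h : i < n + 1 then α ⟨i, h⟩ else 0

/-- The extension of a sequence of length `n+1` by a new entry `c` at index `n+1`. -/
def extendSeq (F : Type) [Field F] (n : ℕ) (α : ℕ → F) (c : F) : ℕ → F :=
  fun i => if i = n + 1 then c else α i

namespace Stmt7
variable {F : Type} [Field F]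

noncomputable def polyOfVec {m : ℕ} (u : Fin m → F) : F[X] :=
  ∑ j : Fin m, C (u j) * X ^ (j : ℕ)

theorem coeff_polyOfVec {m : ℕ} (u : Fin m → F) (k : ℕ) :
    (polyOfVec u).coeff k = if h : k < m then u ⟨k, h⟩ else 0 := by
  rw [polyOfVec, finset_sum_coeff]
  simp only [coeff_C_mul, coeff_X_pow]
  split
  · next h =>
    rw [Finset.sum_eq_single (⟨k, h⟩ : Fin m)]
    · simp
    · intro j _ hj
      have : (j : ℕ) ≠ k := fun hc => hj (by ext; exact hc)
      simp [Ne.symm this]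
    · simp
  · next h =>
    apply Finset.sum_eq_zero
    intro j _
    have : (j : ℕ) ≠ k := by omega
    simp [Ne.symm this]

theorem degree_polyOfVec_lt {m : ℕ} (u : Fin m → F) :
    (polyOfVec u).degree < (m : WithBot ℕ) := by
  rw [degree_lt_iff_coeff_zero]
  intro k hk
  rw [coeff_polyOfVec]
  have : ¬ k < m := by exact_mod_cast not_lt.2 hk
  rw [dif_neg this]

theorem polyOfVec_coeff {m : ℕ} (P : F[X]) (hP : P.degree < (m : WithBot ℕ)) :
    polyOfVec (fun i : Fin m => P.coeff (i : ℕ)) = P := by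
  ext k
  rw [coeff_polyOfVec]
  split
  · rfl
  · next h =>
    symm
    apply coeff_eq_zero_of_degree_lt
    exact lt_of_lt_of_le hP (by exact_mod_cast Nat.le_of_not_lt h)

theorem polyOfVec_eq_zero_iff {m : ℕ} (u : Fin m → F) : polyOfVec u = 0 ↔ u = 0 := by
  constructor
  · intro h
    funext i
    have := coeff_polyOfVec u i
    rw [h] at this
    simp only [coeff_zero] at this
    rw [dif_pos i.2] at this
    simpa using this.symm
  · intro h; subst h; simp [polyOfVec]


/-- The "generating polynomial" `∑_{k=0}^{n} α_k X^{n+1-k}`. -/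
noncomputable def genPoly (n : ℕ) (α : ℕ → F) : F[X] :=
  ∑ k ∈ Finset.range (n + 1), C (α k) * X ^ (n + 1 - k)

theorem coeff_genPoly (n : ℕ) (α : ℕ → F) (e : ℕ) (h1 : 1 ≤ e) (h2 : e ≤ n + 1) :
    (genPoly n α).coeff e = α (n + 1 - e) := by
  rw [genPoly, finset_sum_coeff]
  simp only [coeff_C_mul, coeff_X_pow]
  rw [Finset.sum_eq_single (n + 1 - e)]
  · rw [if_pos (by omega)]; ring
  · intro k hk hke
    rw [Finset.mem_range] at hk
    rw [if_neg (by omega)]; ring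
  · intro hc
    exact absurd (Finset.mem_range.2 (by omega)) hc

theorem coeff_genPoly_zero (n : ℕ) (α : ℕ → F) : (genPoly n α).coeff 0 = 0 := by
  rw [genPoly, finset_sum_coeff]
  apply Finset.sum_eq_zero
  intro k hk
  rw [Finset.mem_range] at hk
  simp only [coeff_C_mul, coeff_X_pow]
  rw [if_neg (by omega)]; ring

theorem degree_genPoly_lt (n : ℕ) (α : ℕ → F) :
    (genPoly n α).degree < ((n + 2 : ℕ) : WithBot ℕ) := by
  rw [degree_lt_iff_coeff_zero]
  intro k hk
  have hk' : n + 2 ≤ k := by exact_mod_cast hk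
  rw [genPoly, finset_sum_coeff]
  apply Finset.sum_eq_zero
  intro j hj
  rw [Finset.mem_range] at hj
  simp only [coeff_C_mul, coeff_X_pow]
  rw [if_neg (by omega)]; ring

/-- Key correspondence: a Hankel product entry is a coefficient of `V·S`. -/
theorem hankel_mulVec_eq_coeff (n : ℕ) (α : ℕ → F) {l m : ℕ} (u : Fin m → F)
    (i : Fin l) (hi : (i : ℕ) + m ≤ n + 1) :
    (hankel F l m α).mulVec u i = (polyOfVec u * genPoly n α).coeff (n + 1 - (i : ℕ)) := by
  simp only [Matrix.mulVec, dotProduct]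
  rw [polyOfVec, Finset.sum_mul, finset_sum_coeff]
  apply Finset.sum_congr rfl
  intro j _
  rw [mul_assoc, coeff_C_mul, coeff_X_pow_mul']
  have hj : (j : ℕ) ≤ n + 1 - (i : ℕ) := by omega
  rw [if_pos hj]
  rw [coeff_genPoly n α _ (by omega) (by omega)]
  have : n + 1 - (n + 1 - (i : ℕ) - (j : ℕ)) = (i : ℕ) + (j : ℕ) := by omega
  rw [this]
  simp [hankel, mul_comm]


/-- Kernel membership in terms of the polynomial module. -/
theorem mulVec_eq_zero_iff (n : ℕ) (α : ℕ → F) {l m : ℕ} (hl : 1 ≤ l)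
    (hlm : l + m ≤ n + 2) (u : Fin m → F) :
    (hankel F l m α).mulVec u = 0 ↔
      ∃ W : F[X], W.degree < ((n + 2 - l : ℕ) : WithBot ℕ) ∧
        (X : F[X]) ^ (n + 2) ∣ polyOfVec u * genPoly n α - W := by
  set V := polyOfVec u with hV
  set P := V * genPoly n α with hP
  constructor
  · intro h
    refine ⟨polyOfVec (fun d : Fin (n + 2 - l) => P.coeff (d : ℕ)), degree_polyOfVec_lt _, ?_⟩
    rw [X_pow_dvd_iff]
    intro d hd
    rw [coeff_sub, coeff_polyOfVec]
    by_cases hd2 : d < n + 2 - l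
    · rw [dif_pos hd2, sub_self]
    · rw [dif_neg hd2, sub_zero]
      -- d ∈ [n+2-l, n+1]; set i := n+1-d < l
      have hi : n + 1 - d < l := by omega
      have := hankel_mulVec_eq_coeff n α u ⟨n + 1 - d, hi⟩ (by omega)
      have h0 : (hankel F l m α).mulVec u ⟨n + 1 - d, hi⟩ = 0 := by rw [h]; rfl
      rw [h0] at this
      have hd' : n + 1 - (n + 1 - d) = d := by omega
      rw [hd'] at this
      exact this.symm
  · rintro ⟨W, hWdeg, hWdvd⟩
    funext i
    rw [hankel_mulVec_eq_coeff n α u i (by omega)]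
    have h1 : P.coeff (n + 1 - (i : ℕ)) = W.coeff (n + 1 - (i : ℕ)) := by
      have := (X_pow_dvd_iff).1 hWdvd (n + 1 - (i : ℕ)) (by omega)
      rw [coeff_sub, sub_eq_zero] at this
      exact this
    rw [h1]
    have hil := i.2
    have : W.degree < ((n + 1 - (i : ℕ) : ℕ) : WithBot ℕ) :=
      lt_of_lt_of_le hWdeg (by exact_mod_cast (by omega : n + 2 - l ≤ n + 1 - (i:ℕ)))
    simpa using coeff_eq_zero_of_degree_lt this


/-- A canonical pair of generators for the module `{(V,W) : X^N ∣ V·S - W}`. -/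
structure GoodPair (N : ℕ) (S A₁ W₁ A₂ W₂ : F[X]) (w₁ w₂ : ℕ) : Prop where
  mem₁ : (X : F[X]) ^ N ∣ A₁ * S - W₁
  mem₂ : (X : F[X]) ^ N ∣ A₂ * S - W₂
  det : ∃ γ : F, γ ≠ 0 ∧ A₁ * W₂ - A₂ * W₁ = C γ * X ^ N
  cop : IsCoprime A₁ A₂
  hsum : w₁ + w₂ = N
  hle : w₁ ≤ w₂
  degA₁ : A₁.degree ≤ (w₁ : WithBot ℕ)
  degW₁ : W₁.degree ≤ (w₁ : WithBot ℕ)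
  degA₂ : A₂.degree ≤ (w₂ : WithBot ℕ)
  degW₂ : W₂.degree ≤ (w₂ : WithBot ℕ)
  hsel : w₁ = w₂ → A₁.degree = (w₁ : WithBot ℕ)

namespace GoodPair

variable {N : ℕ} {S A₁ W₁ A₂ W₂ : F[X]} {w₁ w₂ : ℕ}

theorem A₁_ne_zero (hN : 2 ≤ N) (G : GoodPair N S A₁ W₁ A₂ W₂ w₁ w₂) : A₁ ≠ 0 := by
  intro h
  obtain ⟨γ, hγ, hdet⟩ := G.det
  have hW₁ : W₁ ≠ 0 := by
    intro hW
    rw [h, hW] at hdet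
    simp only [zero_mul, mul_zero, sub_zero, zero_sub, neg_zero] at hdet
    exact hγ (by simpa using (congrArg (fun p => p.coeff N) hdet.symm))
  have h1 : (X : F[X]) ^ N ∣ W₁ := by
    have := G.mem₁
    rw [h, zero_mul, zero_sub, dvd_neg] at this
    exact this
  have h2 : (N : WithBot ℕ) ≤ W₁.degree := by
    have := Polynomial.degree_le_of_dvd h1 hW₁
    simpa [Polynomial.degree_X_pow] using this
  have h3 : W₁.degree ≤ (w₁ : WithBot ℕ) := G.degW₁
  have hw : w₁ < N := by
    have := G.hsum; have := G.hle; omega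
  have := le_trans h2 h3
  exact absurd (by exact_mod_cast this) (by omega)

theorem A₁W₂_ne : ¬ (A₁ = 0 ∧ W₂ = 0) → True := fun _ => trivial

/-- Division: every element of the module is a combination of the generators,
with controlled degrees. -/
theorem division (G : GoodPair N S A₁ W₁ A₂ W₂ w₁ w₂) {V W : F[X]}
    (hVW : (X : F[X]) ^ N ∣ V * S - W) :
    ∃ B₁ B₂ : F[X], V = B₁ * A₁ + B₂ * A₂ ∧ W = B₁ * W₁ + B₂ * W₂ ∧
      B₁.degree + N ≤ max (V.degree + W₂.degree) (W.degree + A₂.degree) ∧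
      B₂.degree + N ≤ max (W.degree + A₁.degree) (V.degree + W₁.degree) := by
  obtain ⟨γ, hγ, hdet⟩ := G.det
  have hd1 : (X : F[X]) ^ N ∣ V * W₂ - W * A₂ := by
    have : V * W₂ - W * A₂ = (-V) * (A₂ * S - W₂) + A₂ * (V * S - W) := by ring
    rw [this]
    exact dvd_add (Dvd.dvd.mul_left G.mem₂ _) (Dvd.dvd.mul_left hVW _)
  have hd2 : (X : F[X]) ^ N ∣ W * A₁ - V * W₁ := by
    have : W * A₁ - V * W₁ = (-A₁) * (V * S - W) + V * (A₁ * S - W₁) := by ring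
    rw [this]
    exact dvd_add (Dvd.dvd.mul_left hVW _) (Dvd.dvd.mul_left G.mem₁ _)
  obtain ⟨B₁', hB₁⟩ := hd1
  obtain ⟨B₂', hB₂⟩ := hd2
  have hXN : (X : F[X]) ^ N ≠ 0 := pow_ne_zero _ X_ne_zero
  refine ⟨C γ⁻¹ * B₁', C γ⁻¹ * B₂', ?_, ?_, ?_, ?_⟩
  · have key : (X : F[X]) ^ N * (B₁' * A₁ + B₂' * A₂) = X ^ N * (C γ * V) := by
      calc (X : F[X]) ^ N * (B₁' * A₁ + B₂' * A₂)
          = A₁ * (X ^ N * B₁') + A₂ * (X ^ N * B₂') := by ring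
        _ = A₁ * (V * W₂ - W * A₂) + A₂ * (W * A₁ - V * W₁) := by rw [← hB₁, ← hB₂]
        _ = V * (A₁ * W₂ - A₂ * W₁) := by ring
        _ = X ^ N * (C γ * V) := by rw [hdet]; ring
    have := mul_left_cancel₀ hXN key
    calc V = C γ⁻¹ * (C γ * V) := by
            rw [← mul_assoc, ← C_mul, inv_mul_cancel₀ hγ, C_1, one_mul]
      _ = C γ⁻¹ * (B₁' * A₁ + B₂' * A₂) := by rw [← this]
      _ = C γ⁻¹ * B₁' * A₁ + C γ⁻¹ * B₂' * A₂ := by ring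
  · have key : (X : F[X]) ^ N * (B₁' * W₁ + B₂' * W₂) = X ^ N * (C γ * W) := by
      calc (X : F[X]) ^ N * (B₁' * W₁ + B₂' * W₂)
          = W₁ * (X ^ N * B₁') + W₂ * (X ^ N * B₂') := by ring
        _ = W₁ * (V * W₂ - W * A₂) + W₂ * (W * A₁ - V * W₁) := by rw [← hB₁, ← hB₂]
        _ = W * (A₁ * W₂ - A₂ * W₁) := by ring
        _ = X ^ N * (C γ * W) := by rw [hdet]; ring
    have := mul_left_cancel₀ hXN key
    calc W = C γ⁻¹ * (C γ * W) := by
            rw [← mul_assoc, ← C_mul, inv_mul_cancel₀ hγ, C_1, one_mul]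
      _ = C γ⁻¹ * (B₁' * W₁ + B₂' * W₂) := by rw [← this]
      _ = C γ⁻¹ * B₁' * W₁ + C γ⁻¹ * B₂' * W₂ := by ring
  · have h1 : (C γ⁻¹ * B₁').degree = B₁'.degree := by
      rw [degree_mul, degree_C (inv_ne_zero hγ), zero_add]
    rw [h1]
    have h2 : B₁'.degree + N = (V * W₂ - W * A₂).degree := by
      rw [hB₁, degree_mul, degree_X_pow]
      cases h : B₁'.degree with
      | bot => simp
      | coe d => simp [← Nat.cast_add, add_comm]
    rw [h2]
    exact le_trans (degree_sub_le _ _) (by rw [degree_mul, degree_mul])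
  · have h1 : (C γ⁻¹ * B₂').degree = B₂'.degree := by
      rw [degree_mul, degree_C (inv_ne_zero hγ), zero_add]
    rw [h1]
    have h2 : B₂'.degree + N = (W * A₁ - V * W₁).degree := by
      rw [hB₂, degree_mul, degree_X_pow]
      cases h : B₂'.degree with
      | bot => simp
      | coe d => simp [← Nat.cast_add, add_comm]
    rw [h2]
    exact le_trans (degree_sub_le _ _) (by rw [degree_mul, degree_mul])


/-- joint injectivity of the combination map -/
theorem combo_inj (G : GoodPair N S A₁ W₁ A₂ W₂ w₁ w₂) {B₁ B₂ : F[X]}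
    (h0 : B₁ * A₁ + B₂ * A₂ = 0)
    (hb₁ : B₁.degree + (w₁ : WithBot ℕ) < (N : WithBot ℕ))
    (hb₂ : B₂.degree + (w₂ : WithBot ℕ) < (N : WithBot ℕ)) : B₁ = 0 ∧ B₂ = 0 := by
  obtain ⟨γ, hγ, hdet⟩ := G.det
  set Wst := B₁ * W₁ + B₂ * W₂ with hWst
  have e0 : B₂ * A₂ = -(B₁ * A₁) := by linear_combination h0
  have hA2 : A₂ * Wst = -(B₁ * (C γ * X ^ N)) := by
    rw [← hdet, hWst]
    linear_combination W₂ * e0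
  have hA1 : A₁ * Wst = B₂ * (C γ * X ^ N) := by
    rw [← hdet, hWst]
    linear_combination W₁ * e0
  obtain ⟨a, b, hab⟩ := G.cop
  have hdvd : (X : F[X]) ^ N ∣ Wst := by
    have : Wst = a * (A₁ * Wst) + b * (A₂ * Wst) := by
      calc Wst = (a * A₁ + b * A₂) * Wst := by rw [hab, one_mul]
        _ = a * (A₁ * Wst) + b * (A₂ * Wst) := by ring
    rw [this, hA1, hA2]
    exact dvd_add ⟨a * B₂ * C γ, by ring⟩ ⟨-(b * B₁ * C γ), by ring⟩
  have hdegWst : Wst.degree < (N : WithBot ℕ) := by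
    apply lt_of_le_of_lt (degree_add_le _ _)
    apply max_lt
    · exact lt_of_le_of_lt (by rw [degree_mul]; exact add_le_add le_rfl G.degW₁) hb₁
    · exact lt_of_le_of_lt (by rw [degree_mul]; exact add_le_add le_rfl G.degW₂) hb₂
  have hWst0 : Wst = 0 := by
    by_contra h
    have := Polynomial.degree_le_of_dvd hdvd h
    rw [degree_X_pow] at this
    exact absurd (lt_of_le_of_lt this hdegWst) (lt_irrefl _)
  have hC : (C γ * X ^ N : F[X]) ≠ 0 :=
    mul_ne_zero (by simpa using hγ) (pow_ne_zero _ X_ne_zero)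
  have hB₂ : B₂ = 0 := by
    have : B₂ * (C γ * X ^ N) = 0 := by rw [← hA1, hWst0, mul_zero]
    exact (mul_eq_zero.1 this).resolve_right hC
  refine ⟨?_, hB₂⟩
  have : B₁ * (C γ * X ^ N) = 0 := by
    have := hA2
    rw [hWst0, mul_zero] at this
    linear_combination this
  exact (mul_eq_zero.1 this).resolve_right hC

end GoodPair

theorem add_lt_add_coe {a b : WithBot ℕ} {a' b' : ℕ} (ha : a < (a' : WithBot ℕ))
    (hb : b ≤ (b' : WithBot ℕ)) : a + b < ((a' + b' : ℕ) : WithBot ℕ) := by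
  cases a with
  | bot => rw [WithBot.bot_add]; exact WithBot.bot_lt_coe _
  | coe x =>
    cases b with
    | bot => rw [WithBot.add_bot]; exact WithBot.bot_lt_coe _
    | coe y =>
      have hx : x < a' := WithBot.coe_lt_coe.1 ha
      have hy : y ≤ b' := WithBot.coe_le_coe.1 hb
      have h := Nat.add_lt_add_of_lt_of_le hx hy
      exact WithBot.coe_lt_coe.2 h

/-- The main kernel description, with degree bounds relative to the weights. -/
theorem kernel_eq {n : ℕ} {α : ℕ → F} {A₁ W₁ A₂ W₂ : F[X]} {w₁ w₂ : ℕ}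
    (G : GoodPair (n + 2) (genPoly n α) A₁ W₁ A₂ W₂ w₁ w₂)
    {l m : ℕ} (hl : 1 ≤ l) (hm : 1 ≤ m) (hlm : l + m = n + 2) :
    {u : Fin m → F | (hankel F l m α).mulVec u = 0} =
    {u : Fin m → F | ∃ B₁ B₂ : F[X],
      B₁.degree + (w₁ : WithBot ℕ) < (m : WithBot ℕ) ∧
      B₂.degree + (w₂ : WithBot ℕ) < (m : WithBot ℕ) ∧
      u = fun i : Fin m => (B₁ * A₁ + B₂ * A₂).coeff (i : ℕ)} := by
  have hml : n + 2 - l = m := by omega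
  ext u
  simp only [Set.mem_setOf_eq]
  rw [mulVec_eq_zero_iff n α hl (le_of_eq hlm) u]
  constructor
  · rintro ⟨W, hWdeg, hWdvd⟩
    rw [hml] at hWdeg
    obtain ⟨B₁, B₂, hV, hW, hd₁, hd₂⟩ := G.division hWdvd
    have hVdeg := degree_polyOfVec_lt u
    refine ⟨B₁, B₂, ?_, ?_, ?_⟩
    · have h1 : B₁.degree + ((n + 2 : ℕ) : WithBot ℕ) < ((m + w₂ : ℕ) : WithBot ℕ) :=
        lt_of_le_of_lt hd₁ (max_lt (add_lt_add_coe hVdeg G.degW₂)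
          (add_lt_add_coe hWdeg G.degA₂))
      have hsum := G.hsum
      have h2 : ((n + 2 : ℕ) : WithBot ℕ) = (w₁ : WithBot ℕ) + (w₂ : WithBot ℕ) := by
        rw [← Nat.cast_add, hsum]
      rw [h2, ← add_assoc] at h1
      have h3 : ((m + w₂ : ℕ) : WithBot ℕ) = (m : WithBot ℕ) + (w₂ : WithBot ℕ) := by
        rw [Nat.cast_add]
      rw [h3] at h1
      exact (WithBot.add_lt_add_iff_right (by exact WithBot.coe_ne_bot)).1 h1
    · have h1 : B₂.degree + ((n + 2 : ℕ) : WithBot ℕ) < ((m + w₁ : ℕ) : WithBot ℕ) :=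
        lt_of_le_of_lt hd₂ (max_lt (add_lt_add_coe hWdeg G.degA₁)
          (add_lt_add_coe hVdeg G.degW₁))
      have hsum := G.hsum
      have h2 : ((n + 2 : ℕ) : WithBot ℕ) = (w₂ : WithBot ℕ) + (w₁ : WithBot ℕ) := by
        rw [← Nat.cast_add]; congr 1; omega
      rw [h2, ← add_assoc] at h1
      have h3 : ((m + w₁ : ℕ) : WithBot ℕ) = (m : WithBot ℕ) + (w₁ : WithBot ℕ) := by
        rw [Nat.cast_add]
      rw [h3] at h1
      exact (WithBot.add_lt_add_iff_right (by exact WithBot.coe_ne_bot)).1 h1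
    · funext i
      rw [← hV, coeff_polyOfVec, dif_pos i.2]
  · rintro ⟨B₁, B₂, hd₁, hd₂, hu⟩
    have hP₁ : (B₁ * A₁).degree < (m : WithBot ℕ) := by
      rw [degree_mul]
      exact lt_of_le_of_lt (add_le_add le_rfl G.degA₁) hd₁
    have hP₂ : (B₂ * A₂).degree < (m : WithBot ℕ) := by
      rw [degree_mul]
      exact lt_of_le_of_lt (add_le_add le_rfl G.degA₂) hd₂
    have hPdeg : (B₁ * A₁ + B₂ * A₂).degree < (m : WithBot ℕ) :=
      lt_of_le_of_lt (degree_add_le _ _) (max_lt hP₁ hP₂)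
    have hVu : polyOfVec u = B₁ * A₁ + B₂ * A₂ := by
      rw [hu]; exact polyOfVec_coeff _ hPdeg
    refine ⟨B₁ * W₁ + B₂ * W₂, ?_, ?_⟩
    · rw [hml]
      apply lt_of_le_of_lt (degree_add_le _ _)
      apply max_lt
      · rw [degree_mul]
        exact lt_of_le_of_lt (add_le_add le_rfl G.degW₁) hd₁
      · rw [degree_mul]
        exact lt_of_le_of_lt (add_le_add le_rfl G.degW₂) hd₂
    · rw [hVu]
      have : (B₁ * A₁ + B₂ * A₂) * genPoly n α - (B₁ * W₁ + B₂ * W₂) =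
          B₁ * (A₁ * genPoly n α - W₁) + B₂ * (A₂ * genPoly n α - W₂) := by ring
      rw [this]
      exact dvd_add (Dvd.dvd.mul_left G.mem₁ _) (Dvd.dvd.mul_left G.mem₂ _)


section Euclid

variable (N : ℕ) (S : F[X])

theorem euclid_finish (hN : 2 ≤ N) (r₀ r₁ u₀ v₀ u₁ v₁ : F[X])
    (e₀ : u₀ * X ^ N + v₀ * S = r₀) (e₁ : u₁ * X ^ N + v₁ * S = r₁)
    (hdt : ∃ ε : F, ε ≠ 0 ∧ u₀ * v₁ - u₁ * v₀ = C ε)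
    (hdeg : v₁.degree + r₀.degree = (N : WithBot ℕ))
    (hI1 : v₀.degree ≤ r₀.degree)
    (hstop : r₀.degree + r₁.degree < (N : WithBot ℕ)) :
    ∃ A₁ W₁ A₂ W₂ : F[X], ∃ w₁ w₂ : ℕ, GoodPair N S A₁ W₁ A₂ W₂ w₁ w₂ := by
  obtain ⟨ε, hε, hdt⟩ := hdt
  have hr₀ : r₀ ≠ 0 := by
    intro h; rw [h, degree_zero, WithBot.add_bot] at hdeg; simp at hdeg
  have hv₁ : v₁ ≠ 0 := by
    intro h; rw [h, degree_zero, WithBot.bot_add] at hdeg; simp at hdeg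
  set e := r₀.natDegree with he
  have hr₀deg : r₀.degree = (e : WithBot ℕ) := degree_eq_natDegree hr₀
  have hnd : v₁.natDegree + e = N := by
    rw [hr₀deg, degree_eq_natDegree hv₁] at hdeg
    exact_mod_cast hdeg
  have heN : e ≤ N := by omega
  have hv₁deg : v₁.degree = ((N - e : ℕ) : WithBot ℕ) := by
    rw [degree_eq_natDegree hv₁, show N - e = v₁.natDegree from by omega]
  have hr₁deg : r₁.degree ≤ ((N - e : ℕ) : WithBot ℕ) := by
    by_cases h : r₁ = 0
    · rw [h, degree_zero]; exact bot_le
    · rw [hr₀deg, degree_eq_natDegree h] at hstop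
      rw [degree_eq_natDegree h]
      have hx : e + r₁.natDegree < N := by exact_mod_cast hstop
      exact_mod_cast (by omega : r₁.natDegree ≤ N - e)
  have hv₀deg : v₀.degree ≤ (e : WithBot ℕ) := hr₀deg ▸ hI1
  have hmem₀ : (X : F[X]) ^ N ∣ v₀ * S - r₀ := ⟨-u₀, by linear_combination e₀⟩
  have hmem₁ : (X : F[X]) ^ N ∣ v₁ * S - r₁ := ⟨-u₁, by linear_combination e₁⟩
  have hdet : v₁ * r₀ - v₀ * r₁ = C ε * X ^ N := by
    calc v₁ * r₀ - v₀ * r₁ = v₁ * (u₀ * X ^ N + v₀ * S) - v₀ * (u₁ * X ^ N + v₁ * S) := by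
          rw [e₀, e₁]
      _ = (u₀ * v₁ - u₁ * v₀) * X ^ N := by ring
      _ = C ε * X ^ N := by rw [hdt]
  have hCinv : C ε⁻¹ * C ε = (1 : F[X]) := by rw [← C_mul, inv_mul_cancel₀ hε, C_1]
  have hcop : IsCoprime v₁ v₀ := by
    refine ⟨C ε⁻¹ * u₀, -(C ε⁻¹ * u₁), ?_⟩
    calc C ε⁻¹ * u₀ * v₁ + -(C ε⁻¹ * u₁) * v₀ = C ε⁻¹ * (u₀ * v₁ - u₁ * v₀) := by ring
      _ = C ε⁻¹ * C ε := by rw [hdt]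
      _ = 1 := hCinv
  by_cases h2 : N - e ≤ e
  · refine ⟨v₁, r₁, v₀, r₀, N - e, e, ?_⟩
    exact { mem₁ := hmem₁, mem₂ := hmem₀, det := ⟨ε, hε, hdet⟩, cop := hcop,
            hsum := by omega, hle := h2,
            degA₁ := le_of_eq hv₁deg, degW₁ := hr₁deg,
            degA₂ := hv₀deg, degW₂ := le_of_eq hr₀deg,
            hsel := fun _ => hv₁deg }
  · refine ⟨v₀, r₀, v₁, r₁, e, N - e, ?_⟩
    refine { mem₁ := hmem₀, mem₂ := hmem₁, det := ⟨-ε, neg_ne_zero.2 hε, ?_⟩,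
             cop := hcop.symm,
             hsum := by omega, hle := by omega,
             degA₁ := hv₀deg, degW₁ := le_of_eq hr₀deg,
             degA₂ := le_of_eq hv₁deg, degW₂ := hr₁deg,
             hsel := fun h => absurd h (by omega) }
    rw [map_neg, neg_mul]
    linear_combination -hdet

theorem euclid_rec (hN : 2 ≤ N) : ∀ k : ℕ, ∀ r₀ r₁ u₀ v₀ u₁ v₁ : F[X],
    r₁.degree < (k : WithBot ℕ) →
    r₁.degree < r₀.degree →
    u₀ * X ^ N + v₀ * S = r₀ → u₁ * X ^ N + v₁ * S = r₁ →
    (∃ ε : F, ε ≠ 0 ∧ u₀ * v₁ - u₁ * v₀ = C ε) →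
    v₁.degree + r₀.degree = (N : WithBot ℕ) →
    v₀.degree ≤ r₀.degree →
    v₀.degree + r₀.degree < (N : WithBot ℕ) →
    ∃ A₁ W₁ A₂ W₂ : F[X], ∃ w₁ w₂ : ℕ, GoodPair N S A₁ W₁ A₂ W₂ w₁ w₂ := by
  intro k
  induction k with
  | zero =>
    intro r₀ r₁ u₀ v₀ u₁ v₁ hk h01 e₀ e₁ hdt hdeg hI1 _
    have hr₁ : r₁ = 0 := by
      by_contra h
      rw [degree_eq_natDegree h] at hk
      exact absurd hk (by exact_mod_cast Nat.not_lt_zero _)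
    apply euclid_finish N S hN r₀ r₁ u₀ v₀ u₁ v₁ e₀ e₁ hdt hdeg hI1
    rw [hr₁, degree_zero, WithBot.add_bot]
    exact WithBot.bot_lt_coe _
  | succ k ih =>
    intro r₀ r₁ u₀ v₀ u₁ v₁ hk h01 e₀ e₁ hdt hdeg hI1 hI2
    by_cases hstop : r₀.degree + r₁.degree < (N : WithBot ℕ)
    · exact euclid_finish N S hN r₀ r₁ u₀ v₀ u₁ v₁ e₀ e₁ hdt hdeg hI1 hstop
    · -- division step
      have hr₁ : r₁ ≠ 0 := by
        intro h
        rw [h, degree_zero, WithBot.add_bot] at hstop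
        exact hstop (WithBot.bot_lt_coe _)
      have hr₀ : r₀ ≠ 0 := by
        intro h; rw [h, degree_zero, WithBot.add_bot] at hdeg; simp at hdeg
      have hv₁ : v₁ ≠ 0 := by
        intro h; rw [h, degree_zero, WithBot.bot_add] at hdeg; simp at hdeg
      set q := r₀ / r₁ with hq
      set r₂ := r₀ % r₁ with hr₂
      have hdm : r₁ * q + r₂ = r₀ := EuclideanDomain.div_add_mod r₀ r₁
      have hr₂deg : r₂.degree < r₁.degree := EuclideanDomain.mod_lt _ hr₁
      have hqdeg : r₁.degree + q.degree = r₀.degree :=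
        degree_add_div hr₁ (le_of_lt h01)
      have hq0 : q ≠ 0 := by
        intro h
        rw [h, degree_zero, WithBot.add_bot] at hqdeg
        exact hr₀ (degree_eq_bot.1 hqdeg.symm)
      -- numeric degrees
      set e := r₀.natDegree with hedef
      set f := r₁.natDegree with hfdef
      have hr₀d : r₀.degree = (e : WithBot ℕ) := degree_eq_natDegree hr₀
      have hr₁d : r₁.degree = (f : WithBot ℕ) := degree_eq_natDegree hr₁
      have hfe : f < e := by
        rw [hr₀d, hr₁d] at h01; exact_mod_cast h01
      have hnd : v₁.natDegree + e = N := by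
        rw [hr₀d, degree_eq_natDegree hv₁] at hdeg
        exact_mod_cast hdeg
      have heN : e ≤ N := by omega
      have hv₁d : v₁.degree = ((N - e : ℕ) : WithBot ℕ) := by
        rw [degree_eq_natDegree hv₁, show N - e = v₁.natDegree from by omega]
      have hef : N ≤ e + f := by
        rw [hr₀d, hr₁d] at hstop
        by_contra h
        exact hstop (by exact_mod_cast (by omega : e + f < N))
      have hqnd : f + q.natDegree = e := by
        rw [hr₀d, hr₁d, degree_eq_natDegree hq0] at hqdeg
        exact_mod_cast hqdeg
      have hqd : q.degree = ((e - f : ℕ) : WithBot ℕ) := by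
        rw [degree_eq_natDegree hq0, show e - f = q.natDegree from by omega]
      have hqv₁ : (q * v₁).degree = ((N - f : ℕ) : WithBot ℕ) := by
        rw [degree_mul, hqd, hv₁d, ← Nat.cast_add,
          show e - f + (N - e) = N - f from by omega]
      -- new invariants
      have hv₀lt : v₀.degree < (q * v₁).degree := by
        rw [hqv₁]
        have h1 : v₀.degree < ((N - e : ℕ) : WithBot ℕ) := by
          rw [hr₀d] at hI2
          by_cases h : v₀ = 0
          · rw [h, degree_zero]; exact WithBot.bot_lt_coe _
          · rw [degree_eq_natDegree h] at hI2 ⊢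
            have : v₀.natDegree + e < N := by exact_mod_cast hI2
            exact_mod_cast (by omega : v₀.natDegree < N - e)
        exact lt_of_lt_of_le h1 (by exact_mod_cast (by omega : N - e ≤ N - f))
      set v₂ := v₀ - q * v₁ with hv₂
      set u₂ := u₀ - q * u₁ with hu₂
      have hv₂deg : v₂.degree = (q * v₁).degree := degree_sub_eq_right_of_degree_lt hv₀lt
      -- apply induction hypothesis to the new state
      apply ih r₁ r₂ u₁ v₁ u₂ v₂
      · -- r₂.degree < k
        have hfk : f < k + 1 := by rw [hr₁d] at hk; exact_mod_cast hk
        refine lt_of_lt_of_le (lt_of_lt_of_le hr₂deg (le_of_eq hr₁d)) ?_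
        exact_mod_cast (by omega : f ≤ k)
      · exact hr₂deg
      · exact e₁
      · -- u₂ * X^N + v₂ * S = r₂
        calc u₂ * X ^ N + v₂ * S
            = (u₀ * X ^ N + v₀ * S) - q * (u₁ * X ^ N + v₁ * S) := by rw [hu₂, hv₂]; ring
          _ = r₀ - q * r₁ := by rw [e₀, e₁]
          _ = r₂ := by linear_combination -hdm
      · -- determinant
        obtain ⟨ε, hε, hdt⟩ := hdt
        refine ⟨-ε, neg_ne_zero.2 hε, ?_⟩
        rw [map_neg]
        calc u₁ * v₂ - u₂ * v₁ = -(u₀ * v₁ - u₁ * v₀) := by rw [hv₂, hu₂]; ring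
          _ = -C ε := by rw [hdt]
      · -- degree v₂ + degree r₁ = N
        rw [hv₂deg, hqv₁, hr₁d, ← Nat.cast_add, show N - f + f = N from by omega]
      · -- v₁.degree ≤ r₁.degree
        rw [hv₁d, hr₁d]
        exact_mod_cast (by omega : N - e ≤ f)
      · -- v₁.degree + r₁.degree < N
        rw [hv₁d, hr₁d, ← Nat.cast_add]
        exact_mod_cast (by omega : N - e + f < N)

theorem exists_goodPair (hN : 2 ≤ N) (hS : S.degree < (N : WithBot ℕ)) :
    ∃ A₁ W₁ A₂ W₂ : F[X], ∃ w₁ w₂ : ℕ, GoodPair N S A₁ W₁ A₂ W₂ w₁ w₂ := by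
  apply euclid_rec N S hN (N + 1) (X ^ N) S 1 0 0 1
  · exact lt_of_lt_of_le hS (by exact_mod_cast (by omega : N ≤ N + 1))
  · rw [degree_X_pow]; exact hS
  · ring
  · ring
  · exact ⟨1, one_ne_zero, by simp⟩
  · rw [degree_one, degree_X_pow, zero_add]
  · rw [degree_zero]; exact bot_le
  · rw [degree_zero, WithBot.bot_add]; exact WithBot.bot_lt_coe _

end Euclid

theorem degree_add_coe_lt_iff (B : F[X]) (w m' : ℕ) :
    B.degree + (w : WithBot ℕ) < (m' : WithBot ℕ) ↔
      B.degree < ((m' - w : ℕ) : WithBot ℕ) ∨ (B = 0 ∧ True) := by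
  constructor
  · intro h
    by_cases hB : B = 0
    · exact Or.inr ⟨hB, trivial⟩
    · left
      rw [degree_eq_natDegree hB] at h ⊢
      have : B.natDegree + w < m' := by exact_mod_cast h
      exact_mod_cast (by omega : B.natDegree < m' - w)
  · rintro (h | ⟨h, -⟩)
    · by_cases hB : B = 0
      · rw [hB, degree_zero, WithBot.bot_add]; exact WithBot.bot_lt_coe _
      · rw [degree_eq_natDegree hB] at h ⊢
        have h1 : B.natDegree < m' - w := by exact_mod_cast h
        exact_mod_cast (by omega : B.natDegree + w < m')
    · rw [h, degree_zero, WithBot.bot_add]; exact WithBot.bot_lt_coe _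

/-- cleaner form -/
theorem degree_add_coe_lt_iff' (B : F[X]) (w m' : ℕ) :
    B.degree + (w : WithBot ℕ) < (m' : WithBot ℕ) ↔
      B.degree < ((m' - w : ℕ) : WithBot ℕ) := by
  rw [degree_add_coe_lt_iff]
  constructor
  · rintro (h | ⟨h, -⟩)
    · exact h
    · rw [h, degree_zero]; exact WithBot.bot_lt_coe _
  · exact Or.inl

theorem degree_lt_zero_iff (B : F[X]) : B.degree < ((0 : ℕ) : WithBot ℕ) ↔ B = 0 := by
  constructor
  · intro h
    by_contra hB
    rw [degree_eq_natDegree hB] at h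
    exact absurd (by exact_mod_cast h : B.natDegree < 0) (Nat.not_lt_zero _)
  · intro h; rw [h, degree_zero]; exact WithBot.bot_lt_coe _

/-- The first weight is the rank of the near-square Hankel matrix. -/
theorem rank_eq_weight {n : ℕ} {α : ℕ → F} {A₁ W₁ A₂ W₂ : F[X]} {w₁ w₂ : ℕ}
    (G : GoodPair (n + 2) (genPoly n α) A₁ W₁ A₂ W₂ w₁ w₂) :
    (hankel F ((n + 2) / 2) ((n + 3) / 2) α).rank = w₁ := by
  set l := (n + 2) / 2 with hl
  set m := (n + 3) / 2 with hm
  have hsum := G.hsum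
  have hle := G.hle
  have hwm : w₂ ≥ m := by omega
  have hw₁l : w₁ ≤ l := by omega
  have hlm : l + m = n + 2 := by omega
  have hl1 : 1 ≤ l := by omega
  have hm1 : 1 ≤ m := by omega
  have hA₁ : A₁ ≠ 0 := G.A₁_ne_zero (by omega)
  set a := m - w₁ with ha
  -- the parametrizing linear map
  let f : Polynomial.degreeLT F a →ₗ[F] (Fin m → F) :=
    { toFun := fun B => fun i => ((B : F[X]) * A₁).coeff (i : ℕ)
      map_add' := by
        intro B C
        funext i
        simp [add_mul]
      map_smul' := by
        intro c B
        funext i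
        simp [Polynomial.smul_eq_C_mul, mul_assoc] }
  have hker : LinearMap.ker (Matrix.mulVecLin (hankel F l m α)) = LinearMap.range f := by
    ext u
    rw [LinearMap.mem_ker, Matrix.mulVecLin_apply, LinearMap.mem_range]
    have hset := Set.ext_iff.1 (kernel_eq G hl1 hm1 hlm) u
    simp only [Set.mem_setOf_eq] at hset
    rw [hset]
    constructor
    · rintro ⟨B₁, B₂, hb₁, hb₂, hu⟩
      have hB₂ : B₂ = 0 := by
        rw [degree_add_coe_lt_iff' B₂ w₂ m, show m - w₂ = 0 from by omega,
          degree_lt_zero_iff] at hb₂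
        exact hb₂
      refine ⟨⟨B₁, ?_⟩, ?_⟩
      · rw [Polynomial.mem_degreeLT]
        rw [degree_add_coe_lt_iff' B₁ w₁ m] at hb₁
        exact_mod_cast hb₁
      · funext i
        rw [hu]
        simp [f, hB₂]
    · rintro ⟨⟨B₁, hB₁⟩, hu⟩
      rw [Polynomial.mem_degreeLT] at hB₁
      refine ⟨B₁, 0, ?_, ?_, ?_⟩
      · rw [degree_add_coe_lt_iff' B₁ w₁ m]
        exact_mod_cast hB₁
      · rw [degree_zero, WithBot.bot_add]; exact WithBot.bot_lt_coe _
      · funext i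
        rw [← hu]
        simp [f]
  have hinj : Function.Injective f := by
    rw [← LinearMap.ker_eq_bot]
    ext B
    simp only [LinearMap.mem_ker, Submodule.mem_bot]
    constructor
    · intro hB
      have hdeg : ((B : F[X]) * A₁).degree < (m : WithBot ℕ) := by
        rw [degree_mul]
        have h1 : (B : F[X]).degree < (a : WithBot ℕ) :=
          Polynomial.mem_degreeLT.1 B.2
        have := add_lt_add_coe h1 G.degA₁
        exact lt_of_lt_of_le this (by exact_mod_cast (by omega : a + w₁ ≤ m))
      have hzero : (B : F[X]) * A₁ = 0 := by
        ext i
        by_cases hi : i < m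
        · have : f B = 0 := hB
          have := congrFun this ⟨i, hi⟩
          simpa [f] using this
        · rw [Polynomial.coeff_zero]
          apply coeff_eq_zero_of_degree_lt
          exact lt_of_lt_of_le hdeg (by exact_mod_cast Nat.le_of_not_lt hi)
      have : (B : F[X]) = 0 := by
        rcases mul_eq_zero.1 hzero with h | h
        · exact h
        · exact absurd h hA₁
      exact Subtype.ext this
    · intro h; rw [h]; exact map_zero f
  -- finrank computations
  haveI : FiniteDimensional F (Polynomial.degreeLT F a) :=
    Module.Finite.equiv (Polynomial.degreeLTEquiv F a).symm
  have h1 : (hankel F l m α).rank + Module.finrank F (LinearMap.ker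
      (Matrix.mulVecLin (hankel F l m α))) = m := by
    have := LinearMap.finrank_range_add_finrank_ker (Matrix.mulVecLin (hankel F l m α))
    rw [Matrix.rank]
    rw [this]
    simp [Module.finrank_fin_fun]
  have h2 : Module.finrank F (LinearMap.ker (Matrix.mulVecLin (hankel F l m α))) = a := by
    rw [hker, LinearMap.finrank_range_of_inj hinj]
    rw [(Polynomial.degreeLTEquiv F a).finrank_eq, Module.finrank_fin_fun]
  rw [h2] at h1
  omega

theorem eq_zero_of_degree_add_lt {B : F[X]} {N : ℕ}
    (h : B.degree + (N : WithBot ℕ) < (N : WithBot ℕ)) : B = 0 := by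
  by_contra hB
  rw [degree_eq_natDegree hB] at h
  have : B.natDegree + N < N := by exact_mod_cast h
  omega

variable [DecidableEq F]

/-- det of the `d₁ × d₁` Hankel matrix is nonzero, `d₁ = deg A₁`. -/
theorem det_ne_zero_at_degA₁ {n : ℕ} {α : ℕ → F} {A₁ W₁ A₂ W₂ : F[X]} {w₁ w₂ : ℕ}
    (G : GoodPair (n + 2) (genPoly n α) A₁ W₁ A₂ W₂ w₁ w₂) :
    (hankel F A₁.natDegree A₁.natDegree α).det ≠ 0 := by
  have hA₁ : A₁ ≠ 0 := G.A₁_ne_zero (by omega)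
  set d := A₁.natDegree with hd
  clear_value d
  have hdw : d ≤ w₁ := by
    have := G.degA₁
    rw [degree_eq_natDegree hA₁, ← hd] at this
    exact_mod_cast this
  have hwN : 2 * w₁ ≤ n + 2 := by have := G.hsum; have := G.hle; omega
  rcases Nat.eq_zero_or_pos d with h0 | hpos
  · rw [h0]
    simp [Matrix.det_fin_zero]
  intro hdet
  obtain ⟨u, hu, hmv⟩ := (Matrix.exists_mulVec_eq_zero_iff).2 hdet
  rw [mulVec_eq_zero_iff n α hpos (by omega) u] at hmv
  obtain ⟨W, hWdeg, hWdvd⟩ := hmv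
  obtain ⟨B₁, B₂, hV, hW, _, hd₂⟩ := G.division hWdvd
  have hVdeg : (polyOfVec u).degree < (d : WithBot ℕ) := degree_polyOfVec_lt u
  have hB₂ : B₂ = 0 := by
    apply eq_zero_of_degree_add_lt (N := n + 2)
    apply lt_of_le_of_lt hd₂
    apply max_lt
    · have hA₁d : A₁.degree ≤ (d : WithBot ℕ) := by
        rw [degree_eq_natDegree hA₁, ← hd]
      apply lt_of_lt_of_le (add_lt_add_coe hWdeg hA₁d)
      have hx : n + 2 - d + d ≤ n + 2 := by omega
      exact_mod_cast hx
    · apply lt_of_lt_of_le (add_lt_add_coe hVdeg G.degW₁)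
      exact_mod_cast (by omega : d + w₁ ≤ n + 2)
  have hB₁ : B₁ = 0 := by
    by_contra hB
    rw [hB₂, zero_mul, add_zero] at hV
    have : (polyOfVec u).degree = B₁.degree + A₁.degree := by rw [hV, degree_mul]
    rw [degree_eq_natDegree hB, degree_eq_natDegree hA₁, ← Nat.cast_add] at this
    rw [this] at hVdeg
    have hq : B₁.natDegree + A₁.natDegree < d := by exact_mod_cast hVdeg
    rw [← hd] at hq
    omega
  rw [hB₁, hB₂] at hV
  simp only [zero_mul, add_zero] at hV
  exact hu ((polyOfVec_eq_zero_iff u).1 hV)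

/-- det of the `l × l` Hankel matrix vanishes for `deg A₁ < l ≤ (n+2)/2`. -/
theorem det_eq_zero_of_gt_degA₁ {n : ℕ} {α : ℕ → F} {A₁ W₁ A₂ W₂ : F[X]} {w₁ w₂ : ℕ}
    (G : GoodPair (n + 2) (genPoly n α) A₁ W₁ A₂ W₂ w₁ w₂)
    {l : ℕ} (hdl : A₁.natDegree < l) (hln : l ≤ (n + 2) / 2) :
    (hankel F l l α).det = 0 := by
  have hA₁ : A₁ ≠ 0 := G.A₁_ne_zero (by omega)
  set d := A₁.natDegree with hd
  set e := W₁.natDegree with he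
  have hdw : d ≤ w₁ := by
    have := G.degA₁
    rw [degree_eq_natDegree hA₁] at this
    exact_mod_cast this
  have hsum := G.hsum
  have hle := G.hle
  have hew : e ≤ w₁ := by
    by_cases hW : W₁ = 0
    · rw [he, hW, natDegree_zero]; omega
    · have := G.degW₁
      rw [degree_eq_natDegree hW] at this
      exact_mod_cast this
  have hkey : e + l ≤ n + 1 := by
    by_cases hcase : e ≤ d
    · omega
    · -- e > d forces w₁ < w₂
      have hww : w₁ < w₂ := by
        rcases lt_or_eq_of_le hle with h | h
        · exact h
        · exfalso
          have hsel := G.hsel h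
          rw [degree_eq_natDegree hA₁] at hsel
          have : d = w₁ := by exact_mod_cast hsel
          omega
      omega
  set j := min (l - 1 - d) (n + 1 - l - e) with hj
  have hjd : j + d ≤ l - 1 := by omega
  have hje : j + e ≤ n + 1 - l := by omega
  -- the witness vector
  set V := (X : F[X]) ^ j * A₁ with hV
  have hVdeg : V.degree = ((j + d : ℕ) : WithBot ℕ) := by
    rw [hV, degree_mul, degree_X_pow, degree_eq_natDegree hA₁, ← Nat.cast_add]
  have hVlt : V.degree < (l : WithBot ℕ) := by
    rw [hVdeg]
    exact_mod_cast (by omega : j + d < l)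
  set u := fun i : Fin l => V.coeff (i : ℕ) with hu
  have hune : u ≠ 0 := by
    intro h
    have h1 : V.coeff (j + d) = 0 := by
      have := congrFun h (⟨j + d, by omega⟩ : Fin l)
      simpa [hu] using this
    rw [show j + d = d + j from by omega] at h1
    rw [hV, coeff_X_pow_mul A₁ j d] at h1
    exact (Polynomial.leadingCoeff_ne_zero.2 hA₁) h1
  rw [← Matrix.exists_mulVec_eq_zero_iff]
  refine ⟨u, hune, ?_⟩
  rw [mulVec_eq_zero_iff n α (by omega) (by omega) u]
  refine ⟨X ^ j * W₁, ?_, ?_⟩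
  · by_cases hW : W₁ = 0
    · rw [hW, mul_zero, degree_zero]; exact WithBot.bot_lt_coe _
    · rw [degree_mul, degree_X_pow, degree_eq_natDegree hW, ← Nat.cast_add]
      exact_mod_cast (by omega : j + e < n + 2 - l)
  · have hpu : polyOfVec u = V := by
      rw [hu]; exact polyOfVec_coeff V hVlt
    rw [hpu]
    have : V * genPoly n α - X ^ j * W₁ = X ^ j * (A₁ * genPoly n α - W₁) := by
      rw [hV]; ring
    rw [this]
    exact Dvd.dvd.mul_left G.mem₁ _

/-- `ρ(α)` equals the degree of the first generator. -/
theorem rhoC_eq_degA₁ {n : ℕ} {α : ℕ → F} {A₁ W₁ A₂ W₂ : F[X]} {w₁ w₂ : ℕ}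
    (G : GoodPair (n + 2) (genPoly n α) A₁ W₁ A₂ W₂ w₁ w₂) :
    rhoC F n α = A₁.natDegree := by
  have hA₁ : A₁ ≠ 0 := G.A₁_ne_zero (by omega)
  have hdw : A₁.natDegree ≤ w₁ := by
    have := G.degA₁
    rw [degree_eq_natDegree hA₁] at this
    exact_mod_cast this
  have hwl : w₁ ≤ (n + 2) / 2 := by have := G.hsum; have := G.hle; omega
  apply IsGreatest.csSup_eq
  constructor
  · exact ⟨by omega, det_ne_zero_at_degA₁ G⟩
  · rintro l ⟨hl1, hl2⟩
    by_contra h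
    exact hl2 (det_eq_zero_of_gt_degA₁ G (by omega) hl1)

theorem degLE_iff (B : F[X]) (w m' : ℕ) :
    degLE F B ((m' : ℤ) - (w : ℤ) - 1) ↔
      B.degree + (w : WithBot ℕ) < (m' : WithBot ℕ) := by
  constructor
  · intro h
    by_cases hB : B = 0
    · rw [hB, degree_zero, WithBot.bot_add]; exact WithBot.bot_lt_coe _
    · rw [degree_eq_natDegree hB]
      have hc : B.coeff B.natDegree ≠ 0 := by
        rw [← Polynomial.leadingCoeff]
        exact Polynomial.leadingCoeff_ne_zero.2 hB
      have h1 : ¬ ((m' : ℤ) - (w : ℤ) - 1 < (B.natDegree : ℤ)) := fun hlt => hc (h _ hlt)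
      have h2 : B.natDegree + w < m' := by omega
      exact_mod_cast h2
  · intro h i hi
    by_contra hc
    have h1 : (i : ℕ) ≤ B.natDegree := Polynomial.le_natDegree_of_ne_zero hc
    have hB : B ≠ 0 := fun h0 => hc (by rw [h0, Polynomial.coeff_zero])
    rw [degree_eq_natDegree hB] at h
    have h2 : B.natDegree + w < m' := by exact_mod_cast h
    omega

theorem degA₂_exact {N : ℕ} {S A₁ W₁ A₂ W₂ : F[X]} {w₁ w₂ : ℕ}
    (G : GoodPair N S A₁ W₁ A₂ W₂ w₁ w₂)
    (hdlt : A₁.degree < (w₁ : WithBot ℕ)) : A₂.degree = (w₂ : WithBot ℕ) := by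
  obtain ⟨γ, hγ, hdet⟩ := G.det
  have hsum := G.hsum
  have hXdeg : (C γ * X ^ N : F[X]).degree = (N : WithBot ℕ) := by
    rw [degree_mul, degree_C hγ, degree_X_pow, zero_add]
  have hlt : (A₁ * W₂).degree < (C γ * X ^ N : F[X]).degree := by
    rw [hXdeg, degree_mul]
    apply lt_of_lt_of_le (add_lt_add_coe hdlt G.degW₂)
    rw [hsum]
  have hA₂W₁ : A₂ * W₁ = A₁ * W₂ - C γ * X ^ N := by linear_combination -hdet
  have hdegprod : (A₂ * W₁).degree = (N : WithBot ℕ) := by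
    rw [hA₂W₁, degree_sub_eq_right_of_degree_lt hlt, hXdeg]
  have hne : A₂ * W₁ ≠ 0 := by
    intro h
    rw [h, degree_zero] at hdegprod
    simp at hdegprod
  have hA₂ : A₂ ≠ 0 := fun h => hne (by rw [h, zero_mul])
  have hW₁ : W₁ ≠ 0 := fun h => hne (by rw [h, mul_zero])
  rw [degree_mul, degree_eq_natDegree hA₂, degree_eq_natDegree hW₁] at hdegprod
  have h1 : A₂.natDegree + W₁.natDegree = N := by exact_mod_cast hdegprod
  have h2 : A₂.natDegree ≤ w₂ := by
    have := G.degA₂; rw [degree_eq_natDegree hA₂] at this; exact_mod_cast this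
  have h3 : W₁.natDegree ≤ w₁ := by
    have := G.degW₁; rw [degree_eq_natDegree hW₁] at this; exact_mod_cast this
  rw [degree_eq_natDegree hA₂]
  exact_mod_cast (by omega : A₂.natDegree = w₂)

end Stmt7

open Stmt7

/-- kernel structure theorem. There are coprime polynomials `A₁, A₂` with
`deg A₁ = ρ(α)` and `deg A₂ ≤ c₂ = n+2-r` describing the kernels of all `H_{l,m}(α)`,
`l+m-2 = n`, in the three ranges `m ≤ c₁`, `c₁ < m ≤ c₂`, `c₂ < m ≤ n+1`; moreover if
`ρ(α) ≠ r` then `deg A₂ = c₂`. -/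
theorem stmt_7 (F : Type) [Field F] [Fintype F] (n r ρ₁ : ℕ) (hn : 0 < n) (α : ℕ → F)
    (hrank : (hankel F ((n + 2) / 2) ((n + 3) / 2) α).rank = r)
    (hρ : rhoC F n α = ρ₁) :
    ∃ A₁ A₂ : Polynomial F, IsCoprime A₁ A₂ ∧
      A₁.degree = (ρ₁ : WithBot ℕ) ∧
      A₂.degree ≤ ((n + 2 - r : ℕ) : WithBot ℕ) ∧
      (ρ₁ ≠ r → A₂.degree = ((n + 2 - r : ℕ) : WithBot ℕ)) ∧
      ∀ l m : ℕ, 1 ≤ l → 1 ≤ m → l + m = n + 2 →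
        ((m ≤ r → ∀ v : Fin m → F, (hankel F l m α).mulVec v = 0 → v = 0) ∧
         (r + 1 ≤ m → m ≤ n + 2 - r →
           {v : Fin m → F | (hankel F l m α).mulVec v = 0} =
           {v : Fin m → F | ∃ B₁ : Polynomial F, degLE F B₁ ((m : ℤ) - r - 1) ∧
             v = fun i : Fin m => (B₁ * A₁).coeff (i : ℕ)}) ∧
         (n + 2 - r + 1 ≤ m →
           {v : Fin m → F | (hankel F l m α).mulVec v = 0} =
           {v : Fin m → F | ∃ B₁ B₂ : Polynomial F,
             degLE F B₁ ((m : ℤ) - r - 1) ∧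
             degLE F B₂ ((m : ℤ) - ((n : ℤ) + 2 - r) - 1) ∧
             v = fun i : Fin m => (B₁ * A₁ + B₂ * A₂).coeff (i : ℕ)})) := by
  classical
  obtain ⟨A₁, W₁, A₂, W₂, w₁, w₂, G⟩ :=
    exists_goodPair (n + 2) (genPoly n α) (by omega)
      (degree_genPoly_lt n α)
  have hw₁ : w₁ = r := by rw [← hrank, rank_eq_weight G]
  subst hw₁
  have hsum := G.hsum
  have hle := G.hle
  have hw₂ : w₂ = n + 2 - w₁ := by omega
  have hA₁ne : A₁ ≠ 0 := G.A₁_ne_zero (by omega)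
  have hρ' : ρ₁ = A₁.natDegree := by rw [← hρ, rhoC_eq_degA₁ G]
  have hdw : A₁.natDegree ≤ w₁ := by
    have := G.degA₁
    rw [degree_eq_natDegree hA₁ne] at this
    exact_mod_cast this
  refine ⟨A₁, A₂, G.cop, ?_, ?_, ?_, ?_⟩
  · rw [degree_eq_natDegree hA₁ne, hρ']
  · rw [← hw₂]; exact G.degA₂
  · intro hne
    rw [← hw₂]
    apply degA₂_exact G
    rw [degree_eq_natDegree hA₁ne]
    exact_mod_cast (by omega : A₁.natDegree < w₁)
  · intro l m hl hm hlm
    have hker := kernel_eq G hl hm hlm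
    refine ⟨?_, ?_, ?_⟩
    · -- m ≤ r : trivial kernel
      intro hmr v hv
      have hvmem : v ∈ {u : Fin m → F | (hankel F l m α).mulVec u = 0} := hv
      rw [hker] at hvmem
      obtain ⟨B₁, B₂, hb₁, hb₂, hu⟩ := hvmem
      have hB₁ : B₁ = 0 := by
        rw [degree_add_coe_lt_iff' B₁ w₁ m, show m - w₁ = 0 from by omega,
          degree_lt_zero_iff] at hb₁
        exact hb₁
      have hB₂ : B₂ = 0 := by
        rw [degree_add_coe_lt_iff' B₂ w₂ m, show m - w₂ = 0 from by omega,
          degree_lt_zero_iff] at hb₂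
        exact hb₂
      rw [hu]
      funext i
      simp [hB₁, hB₂]
    · -- middle range
      intro h1 h2
      rw [hker]
      ext u
      simp only [Set.mem_setOf_eq]
      constructor
      · rintro ⟨B₁, B₂, hb₁, hb₂, hu⟩
        have hB₂ : B₂ = 0 := by
          rw [degree_add_coe_lt_iff' B₂ w₂ m, show m - w₂ = 0 from by omega,
            degree_lt_zero_iff] at hb₂
          exact hb₂
        refine ⟨B₁, (degLE_iff B₁ w₁ m).2 hb₁, ?_⟩
        rw [hu]
        funext i
        simp [hB₂]
      · rintro ⟨B₁, hb₁, hu⟩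
        refine ⟨B₁, 0, (degLE_iff B₁ w₁ m).1 hb₁, ?_, ?_⟩
        · rw [degree_zero, WithBot.bot_add]; exact WithBot.bot_lt_coe _
        · rw [hu]
          funext i
          simp
    · -- third range
      intro h1
      have hzeq : ∀ B : Polynomial F,
          degLE F B ((m : ℤ) - ((n : ℤ) + 2 - w₁) - 1) ↔
          degLE F B ((m : ℤ) - (w₂ : ℤ) - 1) := by
        intro B
        have : (m : ℤ) - ((n : ℤ) + 2 - w₁) - 1 = (m : ℤ) - (w₂ : ℤ) - 1 := by
          have hrn : w₁ ≤ n + 2 := by omega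
          have h2' : (w₂ : ℤ) = (n : ℤ) + 2 - w₁ := by
            rw [hw₂]
            push_cast
            omega
          omega
        rw [this]
      rw [hker]
      ext u
      simp only [Set.mem_setOf_eq]
      constructor
      · rintro ⟨B₁, B₂, hb₁, hb₂, hu⟩
        exact ⟨B₁, B₂, (degLE_iff B₁ w₁ m).2 hb₁,
          (hzeq B₂).2 ((degLE_iff B₂ w₂ m).2 hb₂), hu⟩
      · rintro ⟨B₁, B₂, hb₁, hb₂, hu⟩
        exact ⟨B₁, B₂, (degLE_iff B₁ w₁ m).1 hb₁,
          (degLE_iff B₂ w₂ m).1 ((hzeq B₂).1 hb₂), hu⟩
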